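/- Let a, b ∈ R = k⟨X⟩ * k[Y] be commuting elements of equal total degree n, both top-pure, with b non-pure. Then there exists λ ∈ k such that ā = λ·b̄ in (Gr R)_n. -/

import Mathlib

/-- Words over `X ⊔ Y`. -/
abbrev FM (X Y : Type) := FreeMonoid (X ⊕ Y)

/-- Swapping two adjacent `Y`-letters. -/
def yRel (X Y : Type) : FM X Y → FM X Y → Prop := fun a b =>
  ∃ (u v : FM X Y) (y₁ y₂ : Y),
    a = u * FreeMonoid.of (Sum.inr y₁) * FreeMonoid.of (Sum.inr y₂) * v ∧
    b = u * FreeMonoid.of (Sum.inr y₂) * FreeMonoid.of (Sum.inr y₁) * v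

/-- The congruence generated by swaps of adjacent `Y`-letters. -/
def coCon (X Y : Type) : Con (FM X Y) := conGen (yRel X Y)

/-- The coproduct monoid `⟨X⟩ * [Y]`. -/
abbrev CoprodM (X Y : Type) := (coCon X Y).Quotient

/-- Length descends to the quotient. -/
def lenHom (X Y : Type) : CoprodM X Y →* Multiplicative ℕ :=
  Con.lift _ (FreeMonoid.lift fun _ => Multiplicative.ofAdd 1) (by
    refine Con.conGen_le.mpr ?_
    rintro a b ⟨u, v, y₁, y₂, rfl, rfl⟩
    simp [Con.ker_rel, map_mul])

/-- Length of an element of the coproduct monoid. -/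
def len {X Y : Type} (w : CoprodM X Y) : ℕ := Multiplicative.toAdd (lenHom X Y w)

/-- A monoid recording the commuting prefix and suffix. -/
inductive PS (Y : Type) where
  | pure : Multiset Y → PS Y
  | mixed : Multiset Y → Multiset Y → PS Y

def PS.mul {Y : Type} : PS Y → PS Y → PS Y
  | .pure c, .pure d => .pure (c + d)
  | .pure c, .mixed p s => .mixed (c + p) s
  | .mixed p s, .pure d => .mixed p (s + d)
  | .mixed p _, .mixed _ s' => .mixed p s'

instance {Y : Type} : Monoid (PS Y) where
  mul := PS.mul
  one := .pure 0
  mul_assoc a b c := by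
    rcases a <;> rcases b <;> rcases c <;>
      simp [(· * ·), PS.mul, add_assoc]
  one_mul a := by rcases a <;> simp [(· * ·), PS.mul]
  mul_one a := by rcases a <;> simp [(· * ·), PS.mul]

/-- The prefix/suffix data descends to the quotient. -/
def psHom (X Y : Type) : CoprodM X Y →* PS Y :=
  Con.lift _ (FreeMonoid.lift fun a =>
      match a with
      | Sum.inl _ => PS.mixed 0 0
      | Sum.inr y => PS.pure {y}) (by
    refine Con.conGen_le.mpr ?_
    rintro a b ⟨u, v, y₁, y₂, rfl, rfl⟩
    have key : (PS.pure {y₁} : PS Y) * PS.pure {y₂} = PS.pure {y₂} * PS.pure {y₁} := by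
      show PS.mul _ _ = PS.mul _ _
      simp [PS.mul, add_comm]
    simp only [Con.ker_rel, map_mul, FreeMonoid.lift_eval_of]
    rw [mul_assoc _ (PS.pure {y₁}), key, mul_assoc, ← mul_assoc, ← mul_assoc])

/-- The commuting prefix of an element, as a multiset of `Y`-variables. -/
def pre {X Y : Type} (w : CoprodM X Y) : Multiset Y :=
  match psHom X Y w with
  | .pure c => c
  | .mixed p _ => p

/-- The commuting suffix of an element, as a multiset of `Y`-variables. -/
def suf {X Y : Type} (w : CoprodM X Y) : Multiset Y :=
  match psHom X Y w with
  | .pure c => c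
  | .mixed _ s => s

/-- The canonical embedding of the free abelian monoid `[Y]` (words in `Y`). -/
def yEmb (X Y : Type) : FreeMonoid Y →* CoprodM X Y :=
  (Con.mk' (coCon X Y)).comp (FreeMonoid.map Sum.inr)

/-- An element is pure if it involves only `Y`-variables. -/
def IsPure {X Y : Type} (w : CoprodM X Y) : Prop := w ∈ MonoidHom.mrange (yEmb X Y)

/-- The pure element of the coproduct monoid corresponding to a multiset of
`Y`-variables. -/
noncomputable def pureElt {X Y : Type} (c : Multiset Y) : CoprodM X Y :=
  yEmb X Y (FreeMonoid.ofList c.toList)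

/-- The equivalence relation `∼`: equal lengths and either both pure, or equal
prefix lengths, equal middle parts and equal suffix lengths. -/
noncomputable def Sim {X Y : Type} (u v : CoprodM X Y) : Prop :=
  len u = len v ∧
  ((IsPure u ∧ IsPure v) ∨
    (¬ IsPure u ∧ ¬ IsPure v ∧
      Multiset.card (pre u) = Multiset.card (pre v) ∧
      Multiset.card (suf u) = Multiset.card (suf v) ∧
      ∃ m : CoprodM X Y,
        u = pureElt (pre u) * m * pureElt (suf u) ∧
        v = pureElt (pre v) * m * pureElt (suf v)))


/-! ### Normal form infrastructure -/

section NF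

variable {X Y : Type}

/-- Normal-form states: a leading pure multiset and a list of (X-letter, following
pure multiset) blocks. -/
abbrev NFS (X Y : Type) := Multiset Y × List (X × Multiset Y)

def actLetter : X ⊕ Y → NFS X Y → NFS X Y
  | Sum.inl x, s => (0, (x, s.1) :: s.2)
  | Sum.inr y, s => ({y} + s.1, s.2)

def actF (X Y : Type) : FM X Y →* Function.End (NFS X Y) :=
  FreeMonoid.lift actLetter

lemma actF_of (g : X ⊕ Y) : actF X Y (FreeMonoid.of g) = actLetter g :=
  FreeMonoid.lift_eval_of _ _

def actQ (X Y : Type) : CoprodM X Y →* Function.End (NFS X Y) :=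
  Con.lift _ (actF X Y) (by
    refine Con.conGen_le.mpr ?_
    rintro a b ⟨u, v, y₁, y₂, rfl, rfl⟩
    simp only [Con.ker_rel, map_mul, actF_of]
    funext s
    show actF X Y u (actLetter (Sum.inr y₁) (actLetter (Sum.inr y₂) ((actF X Y) v s))) =
         actF X Y u (actLetter (Sum.inr y₂) (actLetter (Sum.inr y₁) ((actF X Y) v s)))
    refine congrArg _ ?_
    generalize (actF X Y) v s = t
    obtain ⟨c, l⟩ := t
    simp [actLetter, Multiset.singleton_add, Multiset.cons_swap])

lemma actQ_coe (u : FM X Y) : actQ X Y (u : CoprodM X Y) = actF X Y u :=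
  Con.lift_coe _ u

/-- The normal form of an element of the coproduct monoid. -/
def nf (w : CoprodM X Y) : NFS X Y := actQ X Y w (0, [])

def joinL : List (X × Multiset Y) → Multiset Y → List (X × Multiset Y) → List (X × Multiset Y)
  | [], _, lv => lv
  | [(x, e)], d, lv => (x, e + d) :: lv
  | (x, e) :: h :: t, d, lv => (x, e) :: joinL (h :: t) d lv

/-- Concatenation of normal forms. -/
def catS : NFS X Y → NFS X Y → NFS X Y
  | (c, []), t => (c + t.1, t.2)
  | (c, h :: l), t => (c, joinL (h :: l) t.1 t.2)

lemma catS_nil (c : Multiset Y) (t : NFS X Y) : catS (c, []) t = (c + t.1, t.2) := rfl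

lemma catS_cons (c : Multiset Y) (h) (l) (t : NFS X Y) :
    catS (c, h :: l) t = (c, joinL (h :: l) t.1 t.2) := rfl

lemma one_catS (s : NFS X Y) : catS (0, []) s = s := by
  cases s; simp [catS]

lemma actLetter_catS (g : X ⊕ Y) (t s : NFS X Y) :
    actLetter g (catS t s) = catS (actLetter g t) s := by
  obtain ⟨c, l⟩ := t
  cases g with
  | inl x =>
    cases l with
    | nil => simp [actLetter, catS, joinL]
    | cons h tl => simp [actLetter, catS, joinL]
  | inr y =>
    cases l with
    | nil => simp [actLetter, catS, add_assoc]
    | cons h tl => simp [actLetter, catS]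

lemma actF_catS (u : FM X Y) (t s : NFS X Y) :
    actF X Y u (catS t s) = catS (actF X Y u t) s := by
  induction u using FreeMonoid.inductionOn' with
  | one => rfl
  | of_mul g u ih =>
    rw [map_mul, actF_of]
    show actLetter g (actF X Y u (catS t s)) = _
    rw [ih, actLetter_catS]
    rfl

lemma actQ_catS (w : CoprodM X Y) (t s : NFS X Y) :
    actQ X Y w (catS t s) = catS (actQ X Y w t) s := by
  induction w using Con.induction_on with
  | H u => rw [actQ_coe]; exact actF_catS u t s

lemma nf_mul (u v : CoprodM X Y) : nf (u * v) = catS (nf u) (nf v) := by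
  show actQ X Y (u * v) (0, []) = _
  rw [map_mul]
  show actQ X Y u (actQ X Y v (0, [])) = _
  rw [show actQ X Y v (0, []) = catS (0, []) (nf v) from (one_catS _).symm,
    actQ_catS]
  rfl

lemma nf_one : nf (1 : CoprodM X Y) = (0, []) := by
  show actQ X Y 1 (0, []) = (0, [])
  rw [map_one]; rfl

end NF
section NF2

variable {X Y : Type}

/-- The pure element associated to a multiset. -/
noncomputable def pureM (c : Multiset Y) : CoprodM X Y :=
  yEmb X Y (FreeMonoid.ofList c.toList)

lemma yEmb_of (y : Y) :
    yEmb X Y (FreeMonoid.of y) = ((FreeMonoid.of (Sum.inr y) : FM X Y) : CoprodM X Y) := by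
  simp [yEmb]

lemma nf_coe_of (g : X ⊕ Y) :
    nf ((FreeMonoid.of g : FM X Y) : CoprodM X Y) = actLetter g (0, []) := by
  show actQ X Y _ _ = _
  rw [actQ_coe, actF_of]

lemma nf_yEmb_ofList (l : List Y) :
    nf (yEmb X Y (FreeMonoid.ofList l)) = ((l : Multiset Y), []) := by
  induction l with
  | nil =>
    show nf (yEmb X Y 1) = _
    rw [map_one, nf_one]; rfl
  | cons y t ih =>
    rw [FreeMonoid.ofList_cons, map_mul, nf_mul, yEmb_of, nf_coe_of, ih]
    show catS ({y} + 0, []) _ = _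
    rw [catS_nil]
    simp [Multiset.singleton_add]

lemma nf_pureM (c : Multiset Y) : nf (pureM (X := X) c) = (c, []) := by
  rw [pureM, nf_yEmb_ofList, Multiset.coe_toList]

/-- Reconstruction of an element from its normal form. -/
noncomputable def embL : List (X × Multiset Y) → CoprodM X Y
  | [] => 1
  | (x, c) :: t =>
      ((FreeMonoid.of (Sum.inl x) : FM X Y) : CoprodM X Y) * pureM c * embL t

noncomputable def embS (s : NFS X Y) : CoprodM X Y := pureM s.1 * embL s.2

lemma nf_embL (l : List (X × Multiset Y)) : nf (embL (Y := Y) l) = (0, l) := by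
  induction l with
  | nil => exact nf_one
  | cons h t ih =>
    obtain ⟨x, c⟩ := h
    show nf (_ * pureM c * embL t) = _
    rw [nf_mul, nf_mul, nf_coe_of, nf_pureM, ih]
    show catS (catS (0, [(x, 0)]) (c, [])) (0, t) = _
    cases t <;> simp [catS, joinL]

lemma nf_embS (s : NFS X Y) : nf (embS s) = s := by
  obtain ⟨c, l⟩ := s
  rw [embS, nf_mul, nf_pureM, nf_embL, catS_nil]
  simp

lemma yEmb_perm {l l' : List Y} (h : l.Perm l') :
    yEmb X Y (FreeMonoid.ofList l) = yEmb X Y (FreeMonoid.ofList l') := by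
  induction h with
  | nil => rfl
  | cons y _ ih =>
    rw [FreeMonoid.ofList_cons, FreeMonoid.ofList_cons, map_mul, map_mul, ih]
  | swap x y t =>
    show (Con.mk' (coCon X Y)).comp (FreeMonoid.map Sum.inr) _ =
      (Con.mk' (coCon X Y)).comp (FreeMonoid.map Sum.inr) _
    simp only [MonoidHom.comp_apply]
    show ((FreeMonoid.map Sum.inr (FreeMonoid.ofList (y :: x :: t)) : FM X Y) : CoprodM X Y) =
      ((FreeMonoid.map Sum.inr (FreeMonoid.ofList (x :: y :: t)) : FM X Y) : CoprodM X Y)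
    rw [Con.eq]
    apply ConGen.Rel.of
    refine ⟨1, FreeMonoid.map Sum.inr (FreeMonoid.ofList t), y, x, ?_, ?_⟩
    · rw [FreeMonoid.ofList_cons, FreeMonoid.ofList_cons, map_mul, map_mul,
        FreeMonoid.map_of, FreeMonoid.map_of, one_mul, mul_assoc]
    · rw [FreeMonoid.ofList_cons, FreeMonoid.ofList_cons, map_mul, map_mul,
        FreeMonoid.map_of, FreeMonoid.map_of, one_mul, mul_assoc]
  | trans _ _ ih₁ ih₂ => rw [ih₁, ih₂]

lemma pureM_add (c d : Multiset Y) :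
    pureM (X := X) (c + d) = pureM c * pureM d := by
  rw [pureM, pureM, pureM, ← map_mul, ← FreeMonoid.ofList_append]
  apply yEmb_perm
  rw [← Multiset.coe_eq_coe, Multiset.coe_toList]
  show c + d = ((c.toList ++ d.toList : List Y) : Multiset Y)
  rw [← Multiset.coe_add, Multiset.coe_toList, Multiset.coe_toList]

lemma pureM_zero : pureM (X := X) (0 : Multiset Y) = 1 := by
  rw [pureM]
  rw [show (0 : Multiset Y).toList = [] from Multiset.toList_zero]
  exact map_one _

lemma pureM_singleton (y : Y) :
    pureM (X := X) ({y} : Multiset Y) =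
      ((FreeMonoid.of (Sum.inr y) : FM X Y) : CoprodM X Y) := by
  rw [pureM, Multiset.toList_singleton, ← yEmb_of]
  rfl

lemma embS_actLetter (g : X ⊕ Y) (s : NFS X Y) :
    embS (actLetter g s) = ((FreeMonoid.of g : FM X Y) : CoprodM X Y) * embS s := by
  obtain ⟨c, l⟩ := s
  cases g with
  | inl x =>
    show pureM 0 * (_ * pureM c * embL l) = _ * (pureM c * embL l)
    rw [pureM_zero, one_mul, mul_assoc]
  | inr y =>
    show pureM ({y} + c) * embL l = _ * (pureM c * embL l)
    rw [pureM_add, pureM_singleton, mul_assoc]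

lemma embS_nf (w : CoprodM X Y) : embS (nf w) = w := by
  induction w using Con.induction_on with
  | H u =>
    induction u using FreeMonoid.inductionOn' with
    | one =>
      show embS (nf 1) = _
      rw [nf_one]
      show pureM 0 * 1 = 1
      rw [pureM_zero, one_mul]
    | of_mul g u ih =>
      have h1 : ((FreeMonoid.of g * u : FM X Y) : CoprodM X Y) =
          ((FreeMonoid.of g : FM X Y) : CoprodM X Y) * (u : CoprodM X Y) := rfl
      rw [h1, nf_mul, nf_coe_of,
        show catS (actLetter g (0, [])) (nf (u : CoprodM X Y)) =
          actLetter g (nf (u : CoprodM X Y)) from by rw [← actLetter_catS, one_catS],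
        embS_actLetter, ih]

lemma nf_injective : Function.Injective (nf (X := X) (Y := Y)) := by
  intro u v h
  rw [← embS_nf u, ← embS_nf v, h]

end NF2
section NF3

variable {X Y : Type}

/-! ### Length and purity via normal forms -/

def slen (s : NFS X Y) : ℕ :=
  Multiset.card s.1 + (s.2.map fun p => 1 + Multiset.card p.2).sum

lemma len_mul (u v : CoprodM X Y) : len (u * v) = len u + len v := by
  simp [len, map_mul]

lemma len_one : len (1 : CoprodM X Y) = 0 := by simp [len]

lemma len_coe_of (g : X ⊕ Y) : len ((FreeMonoid.of g : FM X Y) : CoprodM X Y) = 1 := by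
  simp [len, lenHom, Con.lift_coe, FreeMonoid.lift_eval_of]
  exact rfl

lemma len_pureM (c : Multiset Y) : len (pureM (X := X) c) = Multiset.card c := by
  have key : ∀ l : List Y, len (yEmb X Y (FreeMonoid.ofList l)) = l.length := by
    intro l
    induction l with
    | nil => show len (yEmb X Y 1) = 0; rw [map_one, len_one]
    | cons y t ih =>
      rw [FreeMonoid.ofList_cons, map_mul, len_mul, yEmb_of, len_coe_of, ih]
      simp [Nat.add_comm]
  rw [pureM, key, Multiset.length_toList]

lemma len_embL (l : List (X × Multiset Y)) :
    len (embL (Y := Y) l) = (l.map fun p => 1 + Multiset.card p.2).sum := by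
  induction l with
  | nil => exact len_one
  | cons h t ih =>
    obtain ⟨x, c⟩ := h
    show len (_ * pureM c * embL t) = _
    rw [len_mul, len_mul, len_coe_of, len_pureM, ih]
    simp

lemma len_embS (s : NFS X Y) : len (embS s) = slen s := by
  obtain ⟨c, l⟩ := s
  rw [embS, len_mul, len_pureM, len_embL]
  rfl

lemma len_eq_slen (w : CoprodM X Y) : len w = slen (nf w) := by
  conv_lhs => rw [← embS_nf w]
  rw [len_embS]

lemma isPure_iff (w : CoprodM X Y) : IsPure w ↔ (nf w).2 = [] := by
  constructor
  · rintro ⟨u, rfl⟩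
    rw [show u = FreeMonoid.ofList u.toList from rfl, nf_yEmb_ofList]
  · intro h
    have h1 : embL (Y := Y) (nf w).2 = 1 := by rw [h]; rfl
    refine ⟨FreeMonoid.ofList (nf w).1.toList, ?_⟩
    conv_rhs => rw [← embS_nf w, embS, h1, mul_one]
    rfl

/-! ### Splitting concatenations -/

lemma joinL_concat : ∀ (l : List (X × Multiset Y)) (x : X) (g d : Multiset Y)
    (lv : List (X × Multiset Y)),
    joinL (l ++ [(x, g)]) d lv = l ++ (x, g + d) :: lv
  | [], x, g, d, lv => rfl
  | (a, ea) :: t, x, g, d, lv => by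
    cases t with
    | nil => rfl
    | cons b t' =>
      show (a, ea) :: joinL ((b :: t') ++ [(x, g)]) d lv = _
      rw [joinL_concat (b :: t') x g d lv]
      rfl

lemma append_singleton_inj {α : Type*} {l₁ l₂ : List α} {a b : α}
    (h : l₁ ++ [a] = l₂ ++ [b]) : l₁ = l₂ ∧ a = b := by
  have h' := congrArg List.reverse h
  simp only [List.reverse_append, List.reverse_singleton, List.singleton_append,
    List.cons.injEq] at h'
  exact ⟨List.reverse_injective h'.2, h'.1⟩

lemma catS_cases {s t : NFS X Y} {T : Multiset Y} {l₀ : List (X × Multiset Y)}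
    {x₀ : X} {e : Multiset Y} (h : catS s t = (T, l₀ ++ [(x₀, e)])) :
    (s.2 = [] ∧ s.1 + t.1 = T ∧ t.2 = l₀ ++ [(x₀, e)]) ∨
    (∃ f, s = (T, l₀ ++ [(x₀, f)]) ∧ t.2 = [] ∧ f + t.1 = e) ∨
    (s.2 ≠ [] ∧ t.2 ≠ []) := by
  obtain ⟨c, l⟩ := s; obtain ⟨d, lv⟩ := t
  cases l with
  | nil =>
    left
    rw [catS_nil] at h
    exact ⟨rfl, congrArg Prod.fst h, congrArg Prod.snd h⟩
  | cons h1 tl =>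
    cases lv with
    | cons h2 t2 => right; right; simp
    | nil =>
      right; left
      rw [catS_cons] at h
      have hc : c = T := congrArg Prod.fst h
      have hl := congrArg Prod.snd h
      simp only at hl
      obtain ⟨l', p, hsplit⟩ := (h1 :: tl).eq_nil_or_concat.resolve_left (by simp)
      obtain ⟨x, g⟩ := p
      rw [List.concat_eq_append] at hsplit
      rw [hsplit, joinL_concat] at hl
      obtain ⟨hl1, hl2⟩ := append_singleton_inj (l₁ := l') (l₂ := l₀) hl
      obtain ⟨hx, hg⟩ := Prod.mk.injEq .. |>.mp hl2
      refine ⟨g, ?_, rfl, by rw [← hg]⟩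
      rw [hsplit, hc, hl1, hx]

lemma catS_pure_left {s t : NFS X Y} (h : s.2 = []) : catS s t = (s.1 + t.1, t.2) := by
  obtain ⟨c, l⟩ := s
  simp only at h
  subst h
  rfl

lemma catS_snd_ne {s t : NFS X Y} (h : s.2 ≠ []) :
    catS s t = (s.1, joinL s.2 t.1 t.2) := by
  obtain ⟨c, l⟩ := s
  cases l with
  | nil => simp at h
  | cons a t' => rfl

lemma mul_eq_iff_catS {u v w : CoprodM X Y} : u * v = w ↔ catS (nf u) (nf v) = nf w := by
  constructor
  · rintro rfl; exact (nf_mul u v).symm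
  · intro h
    apply nf_injective
    rw [nf_mul, h]

end NF3
section ENC

variable {X Y : Type} [DecidableEq Y]

noncomputable def enc1 (c : Multiset Y) : (Y ⊕ Y) →₀ ℕ :=
  Multiset.toFinsupp (c.map Sum.inl)

noncomputable def enc2 (c : Multiset Y) : (Y ⊕ Y) →₀ ℕ :=
  Multiset.toFinsupp (c.map Sum.inr)

lemma enc1_add (c d : Multiset Y) : enc1 (c + d) = enc1 c + enc1 d := by
  simp [enc1, Multiset.toFinsupp_add]

lemma enc2_add (c d : Multiset Y) : enc2 (c + d) = enc2 c + enc2 d := by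
  simp [enc2, Multiset.toFinsupp_add]

lemma enc1_apply_inl (c : Multiset Y) (y : Y) : enc1 c (Sum.inl y) = c.count y := by
  rw [enc1, Multiset.toFinsupp_apply]
  exact Multiset.count_map_eq_count' _ _ Sum.inl_injective _

lemma enc2_apply_inr (c : Multiset Y) (y : Y) : enc2 c (Sum.inr y) = c.count y := by
  rw [enc2, Multiset.toFinsupp_apply]
  exact Multiset.count_map_eq_count' _ _ Sum.inr_injective _

lemma enc1_apply_inr (c : Multiset Y) (y : Y) : enc1 c (Sum.inr y) = 0 := by
  rw [enc1, Multiset.toFinsupp_apply, Multiset.count_eq_zero]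
  simp

lemma enc2_apply_inl (c : Multiset Y) (y : Y) : enc2 c (Sum.inl y) = 0 := by
  rw [enc2, Multiset.toFinsupp_apply, Multiset.count_eq_zero]
  simp

lemma enc_pair_inj {c e c' e' : Multiset Y}
    (h : enc1 c + enc2 e = enc1 c' + enc2 e') : c = c' ∧ e = e' := by
  constructor
  · ext y
    have := DFunLike.congr_fun h (Sum.inl y)
    simpa [enc1_apply_inl, enc2_apply_inl] using this
  · ext y
    have := DFunLike.congr_fun h (Sum.inr y)
    simpa [enc1_apply_inr, enc2_apply_inr] using this

lemma enc1_inj {c c' : Multiset Y} (h : enc1 c = enc1 c') : c = c' := by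
  ext y
  have := DFunLike.congr_fun h (Sum.inl y)
  simpa [enc1_apply_inl] using this

lemma getLast?_append_singleton {α : Type*} (l : List α) (a : α) :
    (l ++ [a]).getLast? = some a := by
  rw [List.getLast?_append_cons]
  rfl

lemma coeff_sum_mul {σ : Type} [DecidableEq σ] {K : Type*} [CommSemiring K] {A B : Type*}
    (s₁ : Finset A) (s₂ : Finset B) (g₁ : A → (σ →₀ ℕ)) (g₂ : B → (σ →₀ ℕ))
    (f₁ : A → K) (f₂ : B → K) (μ : σ →₀ ℕ) :
    MvPolynomial.coeff μ
        ((∑ u ∈ s₁, MvPolynomial.monomial (g₁ u) (f₁ u)) *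
          (∑ v ∈ s₂, MvPolynomial.monomial (g₂ v) (f₂ v))) =
      ∑ p ∈ s₁ ×ˢ s₂, if g₁ p.1 + g₂ p.2 = μ then f₁ p.1 * f₂ p.2 else 0 := by
  rw [Finset.sum_mul_sum, Finset.sum_product]
  simp only [MvPolynomial.monomial_mul, MvPolynomial.coeff_sum, MvPolynomial.coeff_monomial]

lemma malg_mul_apply {k : Type*} [Semiring k] {M : Type*} [Monoid M] [DecidableEq M]
    (f g : MonoidAlgebra k M) (x : M) :
    (f * g).coeff x = ∑ p ∈ f.coeff.support ×ˢ g.coeff.support,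
      if p.1 * p.2 = x then f.coeff p.1 * g.coeff p.2 else 0 := by
  rw [MonoidAlgebra.coeff_mul, Finset.sum_product]
  rfl

/-- The final pure block of a normal form. -/
def lastMS {X Y : Type} (w : CoprodM X Y) : Multiset Y :=
  ((nf w).2.getLast?.map Prod.snd).getD 0

end ENC
/-- Lemma 4.5: commuting top-pure elements of equal total degree `n`, with `b`
non-pure, have proportional leading terms. -/
theorem coprod_leading_terms_proportional_top_pure {X Y k : Type} [Field k]
    (a b : MonoidAlgebra k (CoprodM X Y)) (n : ℕ)
    (hcomm : a * b = b * a)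
    (hda : (∃ w ∈ a.coeff.support, len w = n) ∧ ∀ w ∈ a.coeff.support, len w ≤ n)
    (hdb : (∃ w ∈ b.coeff.support, len w = n) ∧ ∀ w ∈ b.coeff.support, len w ≤ n)
    (hatp : ∀ w ∈ a.coeff.support, len w = n → IsPure w)
    (hbtp : ∀ w ∈ b.coeff.support, len w = n → IsPure w)
    (hbnp : ∃ w ∈ b.coeff.support, ¬ IsPure w) :
    ∃ lam : k, ∀ w : CoprodM X Y, len w = n → a.coeff w = lam * b.coeff w := by
  classical
  obtain ⟨⟨wa, hwa, hwalen⟩, haub⟩ := hda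
  obtain ⟨⟨wb, hwb, hwblen⟩, hbub⟩ := hdb
  obtain ⟨wnp, hwnp, hwnpp⟩ := hbnp
  -- the nonempty finset of impure words appearing in `a` or `b`
  set N : Finset (CoprodM X Y) :=
    (a.coeff.support ∪ b.coeff.support).filter (fun w => ¬ IsPure w) with hN
  have hNne : N.Nonempty :=
    ⟨wnp, Finset.mem_filter.mpr ⟨Finset.mem_union_right _ hwnp, hwnpp⟩⟩
  set m : ℕ := (N.image len).max' (hNne.image len) with hm_def
  obtain ⟨wstar, hwstarN, hwstarlen⟩ : ∃ w ∈ N, len w = m := by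
    obtain ⟨x, hx, hx2⟩ := Finset.mem_image.mp ((N.image len).max'_mem (hNne.image len))
    exact ⟨x, hx, hx2⟩
  have hwstar_mem : wstar ∈ a.coeff.support ∪ b.coeff.support := (Finset.mem_filter.mp hwstarN).1
  have hwstar_np : ¬ IsPure wstar := (Finset.mem_filter.mp hwstarN).2
  have hub : ∀ w, w ∈ a.coeff.support ∪ b.coeff.support → ¬ IsPure w → len w ≤ m := fun w h1 h2 =>
    Finset.le_max' _ _ (Finset.mem_image_of_mem len (Finset.mem_filter.mpr ⟨h1, h2⟩))
  have hmn : m < n := by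
    rcases Finset.mem_union.mp hwstar_mem with h | h
    · have h1 : m ≤ n := hwstarlen ▸ haub wstar h
      rcases h1.lt_or_eq with h2 | h2
      · exact h2
      · exact absurd (hatp wstar h (by rw [hwstarlen, h2])) hwstar_np
    · have h1 : m ≤ n := hwstarlen ▸ hbub wstar h
      rcases h1.lt_or_eq with h2 | h2
      · exact h2
      · exact absurd (hbtp wstar h (by rw [hwstarlen, h2])) hwstar_np
  -- normal form of the maximal impure word
  have hsnd_ne : (nf wstar).2 ≠ [] := fun h => hwstar_np ((isPure_iff wstar).mpr h)
  obtain ⟨l0, p, hl0⟩ := (nf wstar).2.eq_nil_or_concat.resolve_left hsnd_ne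
  obtain ⟨x0, s0⟩ := p
  rw [List.concat_eq_append] at hl0
  set Cc := (l0.map fun p => 1 + Multiset.card p.2).sum + 1 with hCc
  set Ll := Multiset.card (nf wstar).1 + Multiset.card s0 with hLl
  have slen_pat : ∀ d e : Multiset Y,
      slen ((d, l0 ++ [(x0, e)]) : NFS X Y) = Multiset.card d + Multiset.card e + Cc := by
    intro d e
    simp only [slen, List.map_append, List.sum_append, List.map_cons, List.map_nil,
      List.sum_cons, List.sum_nil, hCc]
    omega
  have hnfwstar : nf wstar = ((nf wstar).1, l0 ++ [(x0, s0)]) := by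
    rw [← hl0]
  have hm_eq : m = Ll + Cc := by
    have h1 : len wstar = slen (nf wstar) := len_eq_slen wstar
    rw [hwstarlen, hnfwstar, slen_pat] at h1
    omega
  have hCc1 : 1 ≤ Cc := by omega
  have hLn : Ll < n := by omega
  -- lengths of pattern words
  have len_pure_card : ∀ w : CoprodM X Y, (nf w).2 = [] →
      len w = Multiset.card (nf w).1 := by
    intro w h
    rw [len_eq_slen, slen, h]
    simp
  have len_pat : ∀ w : CoprodM X Y, ∀ e : Multiset Y, (nf w).2 = l0 ++ [(x0, e)] →
      len w = Multiset.card (nf w).1 + Multiset.card e + Cc := by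
    intro w e h
    rw [len_eq_slen, show nf w = ((nf w).1, l0 ++ [(x0, e)]) from by rw [← h], slen_pat]
  -- last-block extraction
  have lastM_eq : ∀ (w : CoprodM X Y) (e : Multiset Y), (nf w).2 = l0 ++ [(x0, e)] →
      lastMS w = e := by
    intro w e h
    show ((nf w).2.getLast?.map Prod.snd).getD 0 = e
    rw [h, getLast?_append_singleton]
    rfl
  -- filtered supports
  set sa := a.coeff.support.filter (fun w => len w = n) with hsadef
  set sb := b.coeff.support.filter (fun w => len w = n) with hsbdef
  set sα := a.coeff.support.filter
    (fun w => len w = m ∧ ∃ d e, nf w = (d, l0 ++ [(x0, e)])) with hsαdef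
  set sβ := b.coeff.support.filter
    (fun w => len w = m ∧ ∃ d e, nf w = (d, l0 ++ [(x0, e)])) with hsβdef
  have hsa : ∀ w ∈ sa, (nf w).2 = [] ∧ Multiset.card (nf w).1 = n := by
    intro w hw
    obtain ⟨hw1, hw2⟩ := Finset.mem_filter.mp hw
    have hp : (nf w).2 = [] := (isPure_iff w).mp (hatp w hw1 hw2)
    exact ⟨hp, by rw [← len_pure_card w hp]; exact hw2⟩
  have hsb : ∀ w ∈ sb, (nf w).2 = [] ∧ Multiset.card (nf w).1 = n := by
    intro w hw
    obtain ⟨hw1, hw2⟩ := Finset.mem_filter.mp hw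
    have hp : (nf w).2 = [] := (isPure_iff w).mp (hbtp w hw1 hw2)
    exact ⟨hp, by rw [← len_pure_card w hp]; exact hw2⟩
  have hsαβ : ∀ w, (len w = m ∧ ∃ d e, nf w = (d, l0 ++ [(x0, e)])) →
      (nf w).2 = l0 ++ [(x0, lastMS w)] ∧
      Multiset.card (nf w).1 + Multiset.card (lastMS w) = Ll := by
    intro w hw
    obtain ⟨hlen, d, e, hnf⟩ := hw
    have h2 : (nf w).2 = l0 ++ [(x0, e)] := by rw [hnf]
    have h3 := lastM_eq w e h2
    constructor
    · rw [h2, h3]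
    · have h4 := len_pat w e h2
      rw [hlen] at h4
      rw [h3]
      omega
  -- pure words are determined by their multiset
  have pure_det : ∀ u u' : CoprodM X Y, (nf u).2 = [] → (nf u').2 = [] →
      (nf u).1 = (nf u').1 → u = u' := by
    intro u u' h h' hh
    exact nf_injective (Prod.ext hh (h.trans h'.symm))
  -- pattern words are determined by their prefix and suffix multisets
  have pat_det : ∀ u u' : CoprodM X Y, ∀ e e' : Multiset Y,
      (nf u).2 = l0 ++ [(x0, e)] → (nf u').2 = l0 ++ [(x0, e')] →
      (nf u).1 = (nf u').1 → e = e' → u = u' := by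
    intro u u' e e' h h' h1 h2
    apply nf_injective
    refine Prod.ext h1 ?_
    rw [h, h', h2]
  -- classification of factorizations, type I (pure times pattern)
  have classifyI : ∀ T s : Multiset Y,
      Multiset.card T + Multiset.card s = n + Ll → Multiset.card s ≤ Ll →
      ∀ u v : CoprodM X Y, u ∈ a.coeff.support ∪ b.coeff.support → v ∈ a.coeff.support ∪ b.coeff.support →
      len u ≤ n → len v ≤ n → u * v = embS (T, l0 ++ [(x0, s)]) →
      len u = n ∧ (nf u).2 = [] ∧ len v = m ∧ nf v = ((nf v).1, l0 ++ [(x0, s)]) := by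
    intro T s htot hsle u v hu hv hun hvn hmul
    have hcat : catS (nf u) (nf v) = (T, l0 ++ [(x0, s)]) := by
      have h := mul_eq_iff_catS.mp hmul
      rwa [nf_embS] at h
    have hlen_sum : len u + len v = n + Ll + Cc := by
      have h := len_mul u v
      rw [hmul, len_embS, slen_pat] at h
      omega
    rcases catS_cases hcat with ⟨h1, h2, h3⟩ | ⟨f, hnu, hv2, hfs⟩ | ⟨hu2, hv2⟩
    · have hvnp : ¬ IsPure v := by
        rw [isPure_iff, h3]; simp
      have hlv : len v = Multiset.card (nf v).1 + Multiset.card s + Cc := len_pat v s h3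
      have hlvm : len v ≤ m := hub v hv hvnp
      have hlu : len u = Multiset.card (nf u).1 := len_pure_card u h1
      have hTc : Multiset.card (nf u).1 + Multiset.card (nf v).1 = Multiset.card T := by
        rw [← h2]; simp
      refine ⟨by omega, h1, by omega, ?_⟩
      rw [← h3]
    · exfalso
      have hfst : (nf u).1 = T := by rw [hnu]
      have hsnd : (nf u).2 = l0 ++ [(x0, f)] := by rw [hnu]
      have hunp : ¬ IsPure u := by
        rw [isPure_iff, hsnd]; simp
      have hlu : len u = Multiset.card T + Multiset.card f + Cc := by
        have h := len_pat u f hsnd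
        rwa [hfst] at h
      have hum : len u ≤ m := hub u hu hunp
      omega
    · exfalso
      have ha1 : len u ≤ m := hub u hu (by rw [isPure_iff]; exact hu2)
      have ha2 : len v ≤ m := hub v hv (by rw [isPure_iff]; exact hv2)
      omega
  -- classification of factorizations, type II (pattern times pure)
  have classifyII : ∀ T s : Multiset Y,
      Multiset.card T + Multiset.card s = n + Ll → Multiset.card T ≤ Ll →
      ∀ u v : CoprodM X Y, u ∈ a.coeff.support ∪ b.coeff.support → v ∈ a.coeff.support ∪ b.coeff.support →
      len u ≤ n → len v ≤ n → u * v = embS (T, l0 ++ [(x0, s)]) →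
      len u = m ∧ (nf u).1 = T ∧
        (∃ f, (nf u).2 = l0 ++ [(x0, f)] ∧ f + (nf v).1 = s) ∧
        len v = n ∧ (nf v).2 = [] := by
    intro T s htot hTle u v hu hv hun hvn hmul
    have hcat : catS (nf u) (nf v) = (T, l0 ++ [(x0, s)]) := by
      have h := mul_eq_iff_catS.mp hmul
      rwa [nf_embS] at h
    have hlen_sum : len u + len v = n + Ll + Cc := by
      have h := len_mul u v
      rw [hmul, len_embS, slen_pat] at h
      omega
    rcases catS_cases hcat with ⟨h1, h2, h3⟩ | ⟨f, hnu, hv2, hfs⟩ | ⟨hu2, hv2⟩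
    · exfalso
      have hvnp : ¬ IsPure v := by
        rw [isPure_iff, h3]; simp
      have hlv : len v = Multiset.card (nf v).1 + Multiset.card s + Cc := len_pat v s h3
      have hlvm : len v ≤ m := hub v hv hvnp
      omega
    · have hfst : (nf u).1 = T := by rw [hnu]
      have hsnd : (nf u).2 = l0 ++ [(x0, f)] := by rw [hnu]
      have hunp : ¬ IsPure u := by
        rw [isPure_iff, hsnd]; simp
      have hlu : len u = Multiset.card T + Multiset.card f + Cc := by
        have h := len_pat u f hsnd
        rwa [hfst] at h
      have hum : len u ≤ m := hub u hu hunp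
      have hlv : len v = Multiset.card (nf v).1 := len_pure_card v hv2
      have hcards : Multiset.card f + Multiset.card (nf v).1 = Multiset.card s := by
        rw [← hfs]; simp
      exact ⟨by omega, hfst, ⟨f, hsnd, hfs⟩, by omega, hv2⟩
    · exfalso
      have ha1 : len u ≤ m := hub u hu (by rw [isPure_iff]; exact hu2)
      have ha2 : len v ≤ m := hub v hv (by rw [isPure_iff]; exact hv2)
      omega
  -- bridge lemmas: coefficients of products of slice polynomials vs convolution
  have bridgeI : ∀ f g : MonoidAlgebra k (CoprodM X Y),
      f.coeff.support ⊆ a.coeff.support ∪ b.coeff.support → g.coeff.support ⊆ a.coeff.support ∪ b.coeff.support →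
      (∀ w ∈ f.coeff.support, len w ≤ n) → (∀ w ∈ g.coeff.support, len w ≤ n) →
      (∀ w ∈ f.coeff.support, len w = n → IsPure w) →
      ∀ T s : Multiset Y, Multiset.card T + Multiset.card s = n + Ll →
        Multiset.card s ≤ Ll →
        MvPolynomial.coeff (enc1 T + enc2 s)
          ((∑ w ∈ f.coeff.support.filter (fun w => len w = n),
              MvPolynomial.monomial (enc1 (nf w).1) (f.coeff w)) *
            (∑ w ∈ g.coeff.support.filter
                (fun w => len w = m ∧ ∃ d e, nf w = (d, l0 ++ [(x0, e)])),
              MvPolynomial.monomial (enc1 (nf w).1 + enc2 (lastMS w)) (g.coeff w)))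
          = (f * g).coeff (embS (T, l0 ++ [(x0, s)])) := by
    intro f g hfsub hgsub hflen hglen hftop T s htot hsle
    rw [coeff_sum_mul, malg_mul_apply]
    refine Eq.trans (Finset.sum_congr rfl ?_) (Finset.sum_subset ?_ ?_)
    · intro p hp
      obtain ⟨hp1, hp2⟩ := Finset.mem_product.mp hp
      obtain ⟨hp1m, hp1len⟩ := Finset.mem_filter.mp hp1
      obtain ⟨hp2m, hp2prop⟩ := Finset.mem_filter.mp hp2
      have hp1pure : (nf p.1).2 = [] := (isPure_iff _).mp (hftop _ hp1m hp1len)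
      obtain ⟨hpat, hcard2⟩ := hsαβ p.2 hp2prop
      apply if_congr _ rfl rfl
      rw [← add_assoc, ← enc1_add]
      constructor
      · intro h
        obtain ⟨hT, hs⟩ := enc_pair_inj h
        rw [mul_eq_iff_catS, nf_embS, catS_pure_left hp1pure]
        exact Prod.ext hT (by rw [hpat, hs])
      · intro h
        rw [mul_eq_iff_catS, nf_embS, catS_pure_left hp1pure] at h
        have h1 : (nf p.1).1 + (nf p.2).1 = T := by simpa using congrArg Prod.fst h
        have h2 : (nf p.2).2 = l0 ++ [(x0, s)] := by simpa using congrArg Prod.snd h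
        rw [hpat] at h2
        obtain ⟨-, h3⟩ := append_singleton_inj h2
        have h4 : lastMS p.2 = s := ((Prod.mk.injEq _ _ _ _).mp h3).2
        rw [h1, h4]
    · exact Finset.product_subset_product (Finset.filter_subset _ _) (Finset.filter_subset _ _)
    · intro p hp hnp
      obtain ⟨hp1, hp2⟩ := Finset.mem_product.mp hp
      by_cases hc : p.1 * p.2 = embS (T, l0 ++ [(x0, s)])
      · exfalso
        apply hnp
        obtain ⟨e1, e2, e3, e4⟩ := classifyI T s htot hsle p.1 p.2 (hfsub hp1) (hgsub hp2)
          (hflen _ hp1) (hglen _ hp2) hc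
        exact Finset.mem_product.mpr ⟨Finset.mem_filter.mpr ⟨hp1, e1⟩,
          Finset.mem_filter.mpr ⟨hp2, e3, (nf p.2).1, s, e4⟩⟩
      · simp [hc]
  have bridgeII : ∀ f g : MonoidAlgebra k (CoprodM X Y),
      f.coeff.support ⊆ a.coeff.support ∪ b.coeff.support → g.coeff.support ⊆ a.coeff.support ∪ b.coeff.support →
      (∀ w ∈ f.coeff.support, len w ≤ n) → (∀ w ∈ g.coeff.support, len w ≤ n) →
      (∀ w ∈ g.coeff.support, len w = n → IsPure w) →
      ∀ T s : Multiset Y, Multiset.card T + Multiset.card s = n + Ll →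
        Multiset.card T ≤ Ll →
        MvPolynomial.coeff (enc1 T + enc2 s)
          ((∑ w ∈ f.coeff.support.filter
                (fun w => len w = m ∧ ∃ d e, nf w = (d, l0 ++ [(x0, e)])),
              MvPolynomial.monomial (enc1 (nf w).1 + enc2 (lastMS w)) (f.coeff w)) *
            (∑ w ∈ g.coeff.support.filter (fun w => len w = n),
              MvPolynomial.monomial (enc2 (nf w).1) (g.coeff w)))
          = (f * g).coeff (embS (T, l0 ++ [(x0, s)])) := by
    intro f g hfsub hgsub hflen hglen hgtop T s htot hTle
    rw [coeff_sum_mul, malg_mul_apply]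
    refine Eq.trans (Finset.sum_congr rfl ?_) (Finset.sum_subset ?_ ?_)
    · intro p hp
      obtain ⟨hp1, hp2⟩ := Finset.mem_product.mp hp
      obtain ⟨hp1m, hp1prop⟩ := Finset.mem_filter.mp hp1
      obtain ⟨hp2m, hp2len⟩ := Finset.mem_filter.mp hp2
      have hp2pure : (nf p.2).2 = [] := (isPure_iff _).mp (hgtop _ hp2m hp2len)
      obtain ⟨hpat, hcard1⟩ := hsαβ p.1 hp1prop
      have hne : (nf p.1).2 ≠ [] := by rw [hpat]; simp
      apply if_congr _ rfl rfl
      rw [add_assoc, ← enc2_add]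
      constructor
      · intro h
        obtain ⟨hT, hs⟩ := enc_pair_inj h
        rw [mul_eq_iff_catS, nf_embS, catS_snd_ne hne, hpat, joinL_concat]
        refine Prod.ext hT ?_
        show l0 ++ (x0, lastMS p.1 + (nf p.2).1) :: (nf p.2).2 = l0 ++ [(x0, s)]
        rw [hp2pure, hs]
      · intro h
        rw [mul_eq_iff_catS, nf_embS, catS_snd_ne hne, hpat, joinL_concat] at h
        have h1 : (nf p.1).1 = T := by simpa using congrArg Prod.fst h
        have h2 : l0 ++ (x0, lastMS p.1 + (nf p.2).1) :: (nf p.2).2 = l0 ++ [(x0, s)] := by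
          simpa using congrArg Prod.snd h
        rw [hp2pure] at h2
        obtain ⟨-, h3⟩ := append_singleton_inj h2
        have h4 : lastMS p.1 + (nf p.2).1 = s := ((Prod.mk.injEq _ _ _ _).mp h3).2
        rw [h1, h4]
    · exact Finset.product_subset_product (Finset.filter_subset _ _) (Finset.filter_subset _ _)
    · intro p hp hnp
      obtain ⟨hp1, hp2⟩ := Finset.mem_product.mp hp
      by_cases hc : p.1 * p.2 = embS (T, l0 ++ [(x0, s)])
      · exfalso
        apply hnp
        obtain ⟨e1, e2, ⟨f', ef1, ef2⟩, e4, e5⟩ := classifyII T s htot hTle p.1 p.2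
          (hfsub hp1) (hgsub hp2) (hflen _ hp1) (hglen _ hp2) hc
        exact Finset.mem_product.mpr ⟨Finset.mem_filter.mpr ⟨hp1, e1, (nf p.1).1, f',
          Prod.ext rfl ef1⟩, Finset.mem_filter.mpr ⟨hp2, e4⟩⟩
      · simp [hc]
  -- the six slice polynomials
  set FA : MvPolynomial (Y ⊕ Y) k := ∑ w ∈ a.coeff.support.filter (fun w => len w = n),
    MvPolynomial.monomial (enc1 (nf w).1) (a.coeff w) with hFAdef
  set FB : MvPolynomial (Y ⊕ Y) k := ∑ w ∈ b.coeff.support.filter (fun w => len w = n),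
    MvPolynomial.monomial (enc1 (nf w).1) (b.coeff w) with hFBdef
  set FA2 : MvPolynomial (Y ⊕ Y) k := ∑ w ∈ a.coeff.support.filter (fun w => len w = n),
    MvPolynomial.monomial (enc2 (nf w).1) (a.coeff w) with hFA2def
  set FB2 : MvPolynomial (Y ⊕ Y) k := ∑ w ∈ b.coeff.support.filter (fun w => len w = n),
    MvPolynomial.monomial (enc2 (nf w).1) (b.coeff w) with hFB2def
  set GA : MvPolynomial (Y ⊕ Y) k := ∑ w ∈ a.coeff.support.filter
      (fun w => len w = m ∧ ∃ d e, nf w = (d, l0 ++ [(x0, e)])),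
    MvPolynomial.monomial (enc1 (nf w).1 + enc2 (lastMS w)) (a.coeff w) with hGAdef
  set GB : MvPolynomial (Y ⊕ Y) k := ∑ w ∈ b.coeff.support.filter
      (fun w => len w = m ∧ ∃ d e, nf w = (d, l0 ++ [(x0, e)])),
    MvPolynomial.monomial (enc1 (nf w).1 + enc2 (lastMS w)) (b.coeff w) with hGBdef
  -- key identity I
  have keyI : FA * GB = FB * GA := by
    apply MvPolynomial.ext
    intro μ
    by_cases hex : ∃ T s : Multiset Y, μ = enc1 T + enc2 s ∧
        Multiset.card T + Multiset.card s = n + Ll ∧ Multiset.card s ≤ Ll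
    · obtain ⟨T, s, rfl, htot, hsle⟩ := hex
      rw [hFAdef, hGBdef, hFBdef, hGAdef,
        bridgeI a b Finset.subset_union_left Finset.subset_union_right haub hbub hatp
          T s htot hsle,
        bridgeI b a Finset.subset_union_right Finset.subset_union_left hbub haub hbtp
          T s htot hsle, hcomm]
    · have hzero : ∀ f g : MonoidAlgebra k (CoprodM X Y),
          (∀ w ∈ f.coeff.support, len w = n → IsPure w) →
          ∀ p : CoprodM X Y × CoprodM X Y,
          p ∈ (f.coeff.support.filter fun w => len w = n) ×ˢ
              (g.coeff.support.filter fun w => len w = m ∧ ∃ d e, nf w = (d, l0 ++ [(x0, e)])) →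
          enc1 (nf p.1).1 + (enc1 (nf p.2).1 + enc2 (lastMS p.2)) ≠ μ := by
        intro f g hftop p hp h
        obtain ⟨hp1, hp2⟩ := Finset.mem_product.mp hp
        obtain ⟨hp1m, hp1len⟩ := Finset.mem_filter.mp hp1
        obtain ⟨hp2m, hp2prop⟩ := Finset.mem_filter.mp hp2
        have hp1pure : (nf p.1).2 = [] := (isPure_iff _).mp (hftop _ hp1m hp1len)
        have hc1 : Multiset.card (nf p.1).1 = n := by
          rw [← len_pure_card _ hp1pure]; exact hp1len
        obtain ⟨hpat, hcard2⟩ := hsαβ p.2 hp2prop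
        rw [← add_assoc, ← enc1_add] at h
        refine hex ⟨(nf p.1).1 + (nf p.2).1, lastMS p.2, h.symm, ?_, by omega⟩
        rw [Multiset.card_add]
        omega
      rw [hFAdef, hGBdef, hFBdef, hGAdef, coeff_sum_mul, coeff_sum_mul,
        Finset.sum_eq_zero fun p hp => if_neg (hzero a b hatp p hp),
        Finset.sum_eq_zero fun p hp => if_neg (hzero b a hbtp p hp)]
  -- key identity II
  have keyII : GA * FB2 = GB * FA2 := by
    apply MvPolynomial.ext
    intro μ
    by_cases hex : ∃ T s : Multiset Y, μ = enc1 T + enc2 s ∧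
        Multiset.card T + Multiset.card s = n + Ll ∧ Multiset.card T ≤ Ll
    · obtain ⟨T, s, rfl, htot, hTle⟩ := hex
      rw [hGAdef, hFB2def, hGBdef, hFA2def,
        bridgeII a b Finset.subset_union_left Finset.subset_union_right haub hbub hbtp
          T s htot hTle,
        bridgeII b a Finset.subset_union_right Finset.subset_union_left hbub haub hatp
          T s htot hTle, hcomm]
    · have hzero : ∀ f g : MonoidAlgebra k (CoprodM X Y),
          (∀ w ∈ g.coeff.support, len w = n → IsPure w) →
          ∀ p : CoprodM X Y × CoprodM X Y,
          p ∈ (f.coeff.support.filter fun w => len w = m ∧ ∃ d e, nf w = (d, l0 ++ [(x0, e)])) ×ˢ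
              (g.coeff.support.filter fun w => len w = n) →
          (enc1 (nf p.1).1 + enc2 (lastMS p.1)) + enc2 (nf p.2).1 ≠ μ := by
        intro f g hgtop p hp h
        obtain ⟨hp1, hp2⟩ := Finset.mem_product.mp hp
        obtain ⟨hp1m, hp1prop⟩ := Finset.mem_filter.mp hp1
        obtain ⟨hp2m, hp2len⟩ := Finset.mem_filter.mp hp2
        have hp2pure : (nf p.2).2 = [] := (isPure_iff _).mp (hgtop _ hp2m hp2len)
        have hc2 : Multiset.card (nf p.2).1 = n := by
          rw [← len_pure_card _ hp2pure]; exact hp2len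
        obtain ⟨hpat, hcard1⟩ := hsαβ p.1 hp1prop
        rw [add_assoc, ← enc2_add] at h
        refine hex ⟨(nf p.1).1, lastMS p.1 + (nf p.2).1, h.symm, ?_, by omega⟩
        rw [Multiset.card_add]
        omega
      rw [hGAdef, hFB2def, hGBdef, hFA2def, coeff_sum_mul, coeff_sum_mul,
        Finset.sum_eq_zero fun p hp => if_neg (hzero a b hbtp p hp),
        Finset.sum_eq_zero fun p hp => if_neg (hzero b a hatp p hp)]
  -- coefficient extraction from the slice polynomials
  have coeff_pat : ∀ (f : MonoidAlgebra k (CoprodM X Y)) (w : CoprodM X Y),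
      w ∈ f.coeff.support.filter (fun w => len w = m ∧ ∃ d e, nf w = (d, l0 ++ [(x0, e)])) →
      MvPolynomial.coeff (enc1 (nf w).1 + enc2 (lastMS w))
        (∑ u ∈ f.coeff.support.filter (fun w => len w = m ∧ ∃ d e, nf w = (d, l0 ++ [(x0, e)])),
          MvPolynomial.monomial (enc1 (nf u).1 + enc2 (lastMS u)) (f.coeff u)) = f.coeff w := by
    intro f w hw
    rw [MvPolynomial.coeff_sum, Finset.sum_eq_single_of_mem w hw]
    · rw [MvPolynomial.coeff_monomial, if_pos rfl]
    · intro u hu hne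
      rw [MvPolynomial.coeff_monomial, if_neg]
      intro h
      obtain ⟨h1, h2⟩ := enc_pair_inj h
      obtain ⟨hpatu, -⟩ := hsαβ u (Finset.mem_filter.mp hu).2
      obtain ⟨hpatw, -⟩ := hsαβ w (Finset.mem_filter.mp hw).2
      exact hne (pat_det u w (lastMS u) (lastMS w) hpatu hpatw h1 h2)
  have hFAne : FA ≠ 0 := by
    have hwamem : wa ∈ a.coeff.support.filter (fun w => len w = n) :=
      Finset.mem_filter.mpr ⟨hwa, hwalen⟩
    have hcoeff : MvPolynomial.coeff (enc1 (nf wa).1) FA = a.coeff wa := by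
      rw [hFAdef, MvPolynomial.coeff_sum, Finset.sum_eq_single_of_mem wa hwamem]
      · rw [MvPolynomial.coeff_monomial, if_pos rfl]
      · intro u hu hne
        rw [MvPolynomial.coeff_monomial, if_neg]
        intro h
        obtain ⟨hum, hulen⟩ := Finset.mem_filter.mp hu
        have hupure : (nf u).2 = [] := (isPure_iff _).mp (hatp _ hum hulen)
        have hwapure : (nf wa).2 = [] := (isPure_iff _).mp (hatp _ hwa hwalen)
        exact hne (pure_det u wa hupure hwapure (enc1_inj h))
    intro h
    rw [h, MvPolynomial.coeff_zero] at hcoeff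
    exact Finsupp.mem_support_iff.mp hwa hcoeff.symm
  have hGAne : GA ≠ 0 := by
    rcases Finset.mem_union.mp hwstar_mem with hma | hmb
    · have hmem : wstar ∈ a.coeff.support.filter
          (fun w => len w = m ∧ ∃ d e, nf w = (d, l0 ++ [(x0, e)])) :=
        Finset.mem_filter.mpr ⟨hma, hwstarlen, (nf wstar).1, s0, hnfwstar⟩
      intro h
      have hc := coeff_pat a wstar hmem
      rw [← hGAdef, h, MvPolynomial.coeff_zero] at hc
      exact Finsupp.mem_support_iff.mp hma hc.symm
    · have hmem : wstar ∈ b.coeff.support.filter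
          (fun w => len w = m ∧ ∃ d e, nf w = (d, l0 ++ [(x0, e)])) :=
        Finset.mem_filter.mpr ⟨hmb, hwstarlen, (nf wstar).1, s0, hnfwstar⟩
      have hGBne : GB ≠ 0 := by
        intro h
        have hc := coeff_pat b wstar hmem
        rw [← hGBdef, h, MvPolynomial.coeff_zero] at hc
        exact Finsupp.mem_support_iff.mp hmb hc.symm
      have h1 : FA * GB ≠ 0 := mul_ne_zero hFAne hGBne
      rw [keyI] at h1
      intro h
      apply h1
      rw [h, mul_zero]
  -- cancel GA
  have hmain : FA * FB2 = FB * FA2 := by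
    apply mul_left_cancel₀ hGAne
    calc GA * (FA * FB2) = FA * (GA * FB2) := by ring
      _ = FA * (GB * FA2) := by rw [keyII]
      _ = (FA * GB) * FA2 := by ring
      _ = (FB * GA) * FA2 := by rw [keyI]
      _ = GA * (FB * FA2) := by ring
  -- final extraction
  have hwbpure : (nf wb).2 = [] := (isPure_iff _).mp (hbtp wb hwb hwblen)
  have hbwbne : b.coeff wb ≠ 0 := Finsupp.mem_support_iff.mp hwb
  refine ⟨a.coeff wb * (b.coeff wb)⁻¹, ?_⟩
  intro w hw
  by_cases hwp : IsPure w
  · have hwpure : (nf w).2 = [] := (isPure_iff w).mp hwp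
    have e1 : MvPolynomial.coeff (enc1 (nf w).1 + enc2 (nf wb).1) (FA * FB2)
        = a.coeff w * b.coeff wb := by
      rw [hFAdef, hFB2def, coeff_sum_mul]
      by_cases hwmem : w ∈ a.coeff.support
      · refine Finset.sum_eq_single_of_mem (w, wb)
          (Finset.mem_product.mpr ⟨Finset.mem_filter.mpr ⟨hwmem, hw⟩,
            Finset.mem_filter.mpr ⟨hwb, hwblen⟩⟩) ?_ |>.trans (if_pos rfl)
        intro p hp hne
        obtain ⟨hp1, hp2⟩ := Finset.mem_product.mp hp
        obtain ⟨hp1m, hp1len⟩ := Finset.mem_filter.mp hp1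
        obtain ⟨hp2m, hp2len⟩ := Finset.mem_filter.mp hp2
        rw [if_neg]
        intro h
        obtain ⟨h1, h2⟩ := enc_pair_inj h
        have hp1pure : (nf p.1).2 = [] := (isPure_iff _).mp (hatp _ hp1m hp1len)
        have hp2pure : (nf p.2).2 = [] := (isPure_iff _).mp (hbtp _ hp2m hp2len)
        exact hne (Prod.ext (pure_det p.1 w hp1pure hwpure h1)
          (pure_det p.2 wb hp2pure hwbpure h2))
      · have hz : a.coeff w = 0 := Finsupp.notMem_support_iff.mp hwmem
        rw [hz, zero_mul]
        apply Finset.sum_eq_zero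
        intro p hp
        obtain ⟨hp1, hp2⟩ := Finset.mem_product.mp hp
        obtain ⟨hp1m, hp1len⟩ := Finset.mem_filter.mp hp1
        rw [if_neg]
        intro h
        obtain ⟨h1, h2⟩ := enc_pair_inj h
        have hp1pure : (nf p.1).2 = [] := (isPure_iff _).mp (hatp _ hp1m hp1len)
        exact hwmem (pure_det p.1 w hp1pure hwpure h1 ▸ hp1m)
    have e2 : MvPolynomial.coeff (enc1 (nf w).1 + enc2 (nf wb).1) (FB * FA2)
        = b.coeff w * a.coeff wb := by
      rw [hFBdef, hFA2def, coeff_sum_mul]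
      by_cases hwmem : w ∈ b.coeff.support
      · by_cases hwbmem : wb ∈ a.coeff.support
        · refine Finset.sum_eq_single_of_mem (w, wb)
            (Finset.mem_product.mpr ⟨Finset.mem_filter.mpr ⟨hwmem, hw⟩,
              Finset.mem_filter.mpr ⟨hwbmem, hwblen⟩⟩) ?_ |>.trans (if_pos rfl)
          intro p hp hne
          obtain ⟨hp1, hp2⟩ := Finset.mem_product.mp hp
          obtain ⟨hp1m, hp1len⟩ := Finset.mem_filter.mp hp1
          obtain ⟨hp2m, hp2len⟩ := Finset.mem_filter.mp hp2
          rw [if_neg]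
          intro h
          obtain ⟨h1, h2⟩ := enc_pair_inj h
          have hp1pure : (nf p.1).2 = [] := (isPure_iff _).mp (hbtp _ hp1m hp1len)
          have hp2pure : (nf p.2).2 = [] := (isPure_iff _).mp (hatp _ hp2m hp2len)
          exact hne (Prod.ext (pure_det p.1 w hp1pure hwpure h1)
            (pure_det p.2 wb hp2pure hwbpure h2))
        · have hz : a.coeff wb = 0 := Finsupp.notMem_support_iff.mp hwbmem
          rw [hz, mul_zero]
          apply Finset.sum_eq_zero
          intro p hp
          obtain ⟨hp1, hp2⟩ := Finset.mem_product.mp hp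
          obtain ⟨hp2m, hp2len⟩ := Finset.mem_filter.mp hp2
          rw [if_neg]
          intro h
          obtain ⟨h1, h2⟩ := enc_pair_inj h
          have hp2pure : (nf p.2).2 = [] := (isPure_iff _).mp (hatp _ hp2m hp2len)
          exact hwbmem (pure_det p.2 wb hp2pure hwbpure h2 ▸ hp2m)
      · have hz : b.coeff w = 0 := Finsupp.notMem_support_iff.mp hwmem
        rw [hz, zero_mul]
        apply Finset.sum_eq_zero
        intro p hp
        obtain ⟨hp1, hp2⟩ := Finset.mem_product.mp hp
        obtain ⟨hp1m, hp1len⟩ := Finset.mem_filter.mp hp1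
        rw [if_neg]
        intro h
        obtain ⟨h1, h2⟩ := enc_pair_inj h
        have hp1pure : (nf p.1).2 = [] := (isPure_iff _).mp (hbtp _ hp1m hp1len)
        exact hwmem (pure_det p.1 w hp1pure hwpure h1 ▸ hp1m)
    have e3 : a.coeff w * b.coeff wb = b.coeff w * a.coeff wb := by
      rw [← e1, ← e2, hmain]
    apply mul_right_cancel₀ hbwbne
    rw [e3]
    field_simp
  · have h1 : a.coeff w = 0 := by
      by_contra h
      exact hwp (hatp w (Finsupp.mem_support_iff.mpr h) hw)
    have h2 : b.coeff w = 0 := by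
      by_contra h
      exact hwp (hbtp w (Finsupp.mem_support_iff.mpr h) hw)
    rw [h1, h2, mul_zero]
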